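/- Let r be a natural number, let G be a finite simple graph and let v be a vertex of G whose punctured ball (for parameter r) is connected. Then for every nonempty proper subset X of the set of edges of G incident with v, there is a cycle of G containing the vertex v, all of whose vertices other than v lie in the punctured ball at v, and whose edge set contains exactly one edge of X. -/

import Mathlib

open SimpleGraph

/-- The ball of radius `r/2` around `v`: vertices at distance at most `⌊r/2⌋` from `v`,
with all edges of `G` between such vertices except, when `r` is even, edges joining two
vertices both at distance exactly `r/2` from `v`. -/
def ballSubgraph {V : Type*} (G : SimpleGraph V) (r : ℕ) (v : V) : G.Subgraph where
  verts := {w | G.Reachable v w ∧ G.dist v w ≤ r / 2}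
  Adj x y := G.Adj x y ∧ (G.Reachable v x ∧ G.dist v x ≤ r / 2) ∧
      (G.Reachable v y ∧ G.dist v y ≤ r / 2) ∧
      ¬(Even r ∧ 2 * G.dist v x = r ∧ 2 * G.dist v y = r)
  adj_sub h := h.1
  edge_vert h := h.2.1
  symm := by
    constructor
    intro x y h
    exact ⟨h.1.symm, h.2.2.1, h.2.1, by tauto⟩

/-- The punctured ball at `v` for parameter `r`: the ball `B_{r/2}(v)` with `v` deleted. -/
def puncturedBall {V : Type*} (G : SimpleGraph V) (r : ℕ) (v : V) : G.Subgraph :=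
  (ballSubgraph G r v).deleteVerts {v}

lemma incidence_eq {V : Type*} {G : SimpleGraph V} {v : V} {e : Sym2 V}
    (he : e ∈ G.incidenceSet v) : ∃ x, G.Adj v x ∧ e = s(v, x) := by
  obtain ⟨a, b⟩ := e
  rw [SimpleGraph.mk'_mem_incidenceSet_iff] at he
  obtain ⟨hadj, h | h⟩ := he
  · exact ⟨b, h ▸ hadj, by rw [h]⟩
  · exact ⟨a, h ▸ hadj.symm, by rw [h, Sym2.eq_swap]⟩

theorem exists_cycle_through_punctured_ball
    {V : Type*} [Fintype V] [DecidableEq V] (r : ℕ) (G : SimpleGraph V) (v : V)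
    (hconn : (puncturedBall G r v).Connected) :
    ∀ X : Finset (Sym2 V), ↑X ⊆ G.incidenceSet v → X.Nonempty →
      ↑X ≠ G.incidenceSet v →
      ∃ c : G.Walk v v, c.IsCycle ∧
        (∀ w ∈ c.support, w ≠ v → w ∈ (puncturedBall G r v).verts) ∧
        (X ∩ c.edges.toFinset).card = 1 := by
  intro X hXsub hXne hXprop
  set H := puncturedBall G r v with hH
  -- r ≥ 2
  have hr : 2 ≤ r := by
    by_contra hr
    push_neg at hr
    obtain ⟨w, hw⟩ := hconn.nonempty
    obtain ⟨⟨hreach, hdist⟩, hwv⟩ := hw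
    interval_cases r <;>
    · simp only [Nat.reduceDiv, Nat.le_zero] at hdist
      exact hwv (Set.mem_singleton_iff.2 ((hreach.dist_eq_zero_iff).1 hdist).symm)
  -- pick e ∈ X and f ∉ X
  obtain ⟨e, heX⟩ := hXne
  obtain ⟨x, hvx, hex⟩ := incidence_eq (hXsub heX)
  have hproper : ∃ f ∈ G.incidenceSet v, f ∉ X := by
    by_contra h
    push_neg at h
    exact hXprop (Set.Subset.antisymm hXsub h)
  obtain ⟨f, hfI, hfX⟩ := hproper
  obtain ⟨y, hvy, hfy⟩ := incidence_eq hfI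
  have hxy : x ≠ y := by
    rintro rfl
    rw [hex, ← hfy] at heX
    exact hfX heX
  -- x, y in punctured ball
  have hhalf : 1 ≤ r / 2 := by omega
  have hxV : x ∈ H.verts := by
    refine ⟨⟨hvx.reachable, le_trans ?_ hhalf⟩, fun h => G.irrefl (h ▸ hvx)⟩
    calc G.dist v x ≤ (SimpleGraph.Walk.cons hvx SimpleGraph.Walk.nil).length :=
          SimpleGraph.dist_le _
      _ = 1 := by simp
  have hyV : y ∈ H.verts := by
    refine ⟨⟨hvy.reachable, le_trans ?_ hhalf⟩, fun h => G.irrefl (h ▸ hvy)⟩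
    calc G.dist v y ≤ (SimpleGraph.Walk.cons hvy SimpleGraph.Walk.nil).length :=
          SimpleGraph.dist_le _
      _ = 1 := by simp
  have hvV : v ∉ H.verts := fun h => h.2 rfl
  -- path in punctured ball from x to y
  obtain ⟨p0⟩ := hconn ⟨x, hxV⟩ ⟨y, hyV⟩
  set pp : H.coe.Walk ⟨x, hxV⟩ ⟨y, hyV⟩ := (p0.toPath : H.coe.Path _ _).val with hpp
  have hppPath : pp.IsPath := p0.toPath.2
  set q : G.Walk x y := pp.map H.hom with hq
  have hqPath : q.IsPath :=
    SimpleGraph.Walk.map_isPath_of_injective SimpleGraph.Subgraph.hom_injective hppPath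
  have hqsupp : ∀ w ∈ q.support, w ∈ H.verts := by
    intro w hw
    replace hw : w ∈ (pp.map H.hom).support := hw
    rw [SimpleGraph.Walk.support_map, List.mem_map] at hw
    obtain ⟨⟨w', hw'⟩, _, rfl⟩ := hw
    exact hw'
  have hvq : v ∉ q.support := fun h => hvV (hqsupp v h)
  -- build the cycle
  set p' : G.Walk x v := q.concat hvy.symm with hp'
  have hp'supp : p'.support = q.support.concat v := by
    rw [List.concat_eq_append]; exact q.support_concat hvy.symm
  have hp'Path : p'.IsPath := by
    rw [SimpleGraph.Walk.isPath_def, hp'supp, List.concat_eq_append, List.nodup_append]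
    exact ⟨hqPath.support_nodup, List.nodup_singleton v, by
      intro a ha b hb; simp only [List.mem_singleton] at hb; subst hb; rintro rfl; exact hvq ha⟩
  have hp'edges : p'.edges = q.edges.concat s(y, v) := q.edges_concat hvy.symm
  have hxv : x ≠ v := fun h => G.irrefl (h ▸ hvx)
  have hyv : y ≠ v := fun h => G.irrefl (h ▸ hvy)
  have hvxne : s(v, x) ∉ p'.edges := by
    rw [hp'edges]
    simp only [List.concat_eq_append, List.mem_append, List.mem_singleton]
    rintro (h | h)
    · exact hvq (SimpleGraph.Walk.fst_mem_support_of_mem_edges q h)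
    · rw [Sym2.eq_iff] at h
      rcases h with ⟨_, h2⟩ | ⟨_, h2⟩
      · exact hxv h2
      · exact hxy h2
  refine ⟨SimpleGraph.Walk.cons hvx p', ?_, ?_, ?_⟩
  · exact (SimpleGraph.Walk.cons_isCycle_iff p' hvx).2 ⟨hp'Path, hvxne⟩
  · intro w hw hwv
    rw [SimpleGraph.Walk.support_cons, List.mem_cons] at hw
    rcases hw with h | hw
    · exact absurd h hwv
    · rw [hp'supp, List.concat_eq_append, List.mem_append, List.mem_singleton] at hw
      rcases hw with h | h
      · exact hqsupp w h
      · exact absurd h hwv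
  · rw [Finset.card_eq_one]
    refine ⟨e, ?_⟩
    ext g
    simp only [Finset.mem_inter, List.mem_toFinset, Finset.mem_singleton]
    constructor
    · rintro ⟨hgX, hgedges⟩
      obtain ⟨z, hvz, hgz⟩ := incidence_eq (hXsub hgX)
      rw [SimpleGraph.Walk.edges_cons, List.mem_cons, hp'edges,
        List.concat_eq_append, List.mem_append, List.mem_singleton] at hgedges
      rcases hgedges with h | h | h
      · rw [h, ← hex]
      · exfalso
        apply hvq
        rw [hgz] at h
        exact SimpleGraph.Walk.fst_mem_support_of_mem_edges q h
      · exfalso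
        apply hfX
        have : g = f := by
          rw [hgz, hfy]
          rw [hgz, Sym2.eq_iff] at h
          rcases h with ⟨h1, _⟩ | ⟨h1, h2⟩
          · exact absurd h1.symm hyv
          · rw [h2]
        rw [← this]
        exact hgX
    · rintro rfl
      refine ⟨heX, ?_⟩
      rw [SimpleGraph.Walk.edges_cons, List.mem_cons]
      left
      exact hex
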